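/- Let G be a group, N ≥ 2 an integer, and s, v ∈ G with s^N = 1, satisfying far-commutation. Let q be a divisor of N with q ≥ 2 and r ≥ 1 an integer, and let F := f_{(q−1)r} ⋯ f_r · f_0 be the Floquet operator of the canonical circuit. Then F is invariant under translation by q sites: s^{−q} F s^q = F. -/
import Mathlib

/-- The translated gate `v_i := s^{-i} v s^i`. -/
def vgate {G : Type*} [Group G] (s v : G) (i : ℤ) : G := s ^ (-i) * v * s ^ i

/-- The layer `f_m := v_{m+(N/q−1)q} ⋯ v_{m+q} · v_m`. -/
def layer {G : Type*} [Group G] (s v : G) (N q : ℕ) (m : ℤ) : G :=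
  (((List.range (N / q)).reverse).map (fun k => vgate s v (m + (k : ℤ) * (q : ℤ)))).prod

/-- Far-commutation: gates commute unless their site difference is ±1 mod N. -/
def FarCommute {G : Type*} [Group G] (s v : G) (N : ℕ) : Prop :=
  ∀ i j : ℤ, ¬ (i - j ≡ 1 [ZMOD (N : ℤ)]) → ¬ (i - j ≡ -1 [ZMOD (N : ℤ)]) →
    vgate s v i * vgate s v j = vgate s v j * vgate s v i

/-- The Floquet operator `F = f_{(q−1)r} ⋯ f_r · f_0`. -/
def floquet {G : Type*} [Group G] (s v : G) (N q r : ℕ) : G :=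
  (((List.range q).reverse).map (fun j => layer s v N q ((j : ℤ) * (r : ℤ)))).prod

lemma conj_list_prod {G : Type*} [Group G] (a : G) (l : List G) :
    a⁻¹ * l.prod * a = (l.map (fun x => a⁻¹ * x * a)).prod := by
  induction l with
  | nil => simp
  | cons x l ih => simp only [List.prod_cons, List.map_cons, ← ih]; group

lemma peel {M : Type*} [Monoid M] (g : ℕ → M) (m : ℕ) :
    ((List.range (m+1)).reverse.map g).prod
      = ((List.range m).reverse.map (fun k => g (k+1))).prod * g 0 := by
  induction m with
  | zero => simp [List.range_succ]
  | succ m ih =>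
      rw [List.range_succ (n := m+1), List.reverse_append, List.map_append,
        List.prod_append, ih, List.range_succ (n := m), List.reverse_append,
        List.map_append, List.prod_append]
      simp [mul_assoc]

lemma vgate_conj {G : Type*} [Group G] (s v : G) (q : ℕ) (i : ℤ) :
    (s ^ q)⁻¹ * vgate s v i * s ^ q = vgate s v (i + q) := by
  simp only [vgate, ← zpow_natCast s q]
  group

lemma vgate_period {G : Type*} [Group G] (s v : G) (N : ℕ) (hs : s ^ N = 1) (i : ℤ) :
    vgate s v (i + N) = vgate s v i := by
  have h : s ^ (N : ℤ) = 1 := by rw [zpow_natCast, hs]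
  simp [vgate, zpow_add, neg_add, h]

lemma vgate_commute {G : Type*} [Group G] (s v : G) (N q : ℕ)
    (hcomm : FarCommute s v N) (hq : q ∣ N) (hq2 : 2 ≤ q)
    (m : ℤ) (k k' : ℤ) :
    Commute (vgate s v (m + k * q)) (vgate s v (m + k' * q)) := by
  have hqd : ∀ c : ℤ, c = 1 ∨ c = -1 →
      ¬ ((m + k * q) - (m + k' * q) ≡ c [ZMOD (N : ℤ)]) := by
    intro c hcpm hc
    have h1 : (N : ℤ) ∣ c - ((m + k * q) - (m + k' * q)) := Int.ModEq.dvd hc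
    have h2 : (q : ℤ) ∣ c - ((m + k * q) - (m + k' * q)) :=
      dvd_trans (Int.natCast_dvd_natCast.mpr hq) h1
    have h3 : (q : ℤ) ∣ (m + k * q) - (m + k' * q) := ⟨k - k', by ring⟩
    have h4 : (q : ℤ) ∣ c := by
      have := dvd_add h2 h3; simpa using this
    have h5 : (q : ℤ) ∣ 1 := by
      rcases hcpm with rfl | rfl
      · exact h4
      · exact (dvd_neg.mp h4)
    have := Int.le_of_dvd one_pos h5
    omega
  exact hcomm _ _ (hqd 1 (Or.inl rfl)) (hqd (-1) (Or.inr rfl))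

lemma bind_pure_cast (l : List ℕ) :
    (do let a ← l; pure ((a : ℤ))) = l.map Int.ofNat := by
  induction l with
  | nil => rfl
  | cons x l ih => simpa using ih

lemma layer_eq {G : Type*} [Group G] (s v : G) (N q : ℕ) (m : ℤ) :
    layer s v N q m
      = ((List.range (N / q)).reverse.map
          (fun k : ℕ => vgate s v (m + Int.ofNat k * q))).prod := by
  unfold layer
  rw [bind_pure_cast, List.map_map]
  rfl

lemma layer_conj {G : Type*} [Group G] (s v : G) (N q : ℕ) (hN : 2 ≤ N)
    (hs : s ^ N = 1) (hcomm : FarCommute s v N) (hq : q ∣ N) (hq2 : 2 ≤ q) (m : ℤ) :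
    (s ^ q)⁻¹ * layer s v N q m * s ^ q = layer s v N q m := by
  obtain ⟨n, hn⟩ : ∃ n, N / q = n + 1 :=
    ⟨N / q - 1, by
      have : 0 < N / q := Nat.div_pos (Nat.le_of_dvd (by omega) hq) (by omega)
      omega⟩
  set g : ℕ → G := fun k => vgate s v (m + (k : ℤ) * q) with hg
  have hNq : ((n : ℤ) + 1) * q = N := by
    have h := Nat.div_mul_cancel hq
    rw [hn] at h
    push_cast [← h]; ring
  rw [layer_eq, conj_list_prod, List.map_map, hn]
  have hmap2 : (fun k : ℕ => vgate s v (m + Int.ofNat k * q)) = g := by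
    funext k; simp [hg]
  rw [hmap2]
  have hmap3 : ((fun x => (s ^ q)⁻¹ * x * s ^ q) ∘ g) = fun k : ℕ => g (k + 1) := by
    funext k
    simp only [Function.comp, hg, vgate_conj]
    congr 1
    push_cast; ring
  rw [hmap3, peel g n, List.range_succ (n := n), List.reverse_append, List.map_append,
    List.prod_append]
  have hg0 : g (n + 1) = g 0 := by
    simp only [hg]
    have h1 : m + ((n : ℕ) + 1 : ℤ) * q = (m + ((0 : ℕ) : ℤ) * q) + N := by
      rw [← hNq]; push_cast; ring
    push_cast
    rw [h1, vgate_period s v N hs]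
    push_cast; ring_nf
  have hcom : Commute (g 0) (((List.range n).reverse.map (fun k => g (k + 1))).prod) := by
    apply Commute.list_prod_right
    intro y hy
    simp only [List.mem_map, List.mem_reverse, List.mem_range] at hy
    obtain ⟨k, _, rfl⟩ := hy
    have := vgate_commute s v N q hcomm hq hq2 m 0 ((k : ℤ) + 1)
    simpa [hg] using this
  simp only [List.reverse_cons, List.reverse_nil, List.nil_append, List.map_cons,
    List.map_nil, List.prod_cons, List.prod_nil, mul_one, hg0]
  exact hcom.eq

/-- The Floquet operator `F = f_{(q−1)r} ⋯ f_r · f_0` is invariant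
under translation by `q` sites. -/
theorem floquet_translation_invariant {G : Type*} [Group G] (N : ℕ) (hN : 2 ≤ N)
    (s v : G) (hs : s ^ N = 1) (hcomm : FarCommute s v N)
    (q : ℕ) (hq : q ∣ N) (hq2 : 2 ≤ q) (r : ℕ) (hr : 1 ≤ r) :
    (s ^ q)⁻¹ * floquet s v N q r * s ^ q = floquet s v N q r := by
  unfold floquet
  rw [conj_list_prod, List.map_map]
  congr 1
  apply List.map_congr_left
  intro j _
  exact layer_conj s v N q hN hs hcomm hq hq2 _
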